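/- Let $A, B$ be positive definite $n \times n$ complex matrices such that $sA \le B \le tA$ in the Loewner order for some constants $0 < s \le t$, and let $\alpha \in [0,1]$. Then $(1-\alpha)A + \alpha B \le \max\{K(s)^R, K(t)^R\} \, (A \sharp_\alpha B)$, where $A \sharp_\alpha B = A^{1/2}(A^{-1/2} B A^{-1/2})^{\alpha} A^{1/2}$, $K(x) = (x+1)^2/(4x)$, and $R = \max\{\alpha, 1-\alpha\}$. -/

import Mathlib

open Matrix
open scoped ComplexOrder

open Set

/-- Kantorovich function bound on an interval via convexity. -/
lemma K_le_max {s t x : ℝ} (hs : 0 < s) (hx : x ∈ Set.Icc s t) :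
    (x + 1)^2 / (4 * x) ≤ max ((s + 1)^2 / (4 * s)) ((t + 1)^2 / (4 * t)) := by
  have hst : s ≤ t := le_trans hx.1 hx.2
  have ht : 0 < t := lt_of_lt_of_le hs hst
  have hx0 : 0 < x := lt_of_lt_of_le hs hx.1
  have hconv : ConvexOn ℝ (Ioi (0:ℝ)) (fun y : ℝ => y + y⁻¹) := by
    have h1 : ConvexOn ℝ (Ioi (0:ℝ)) (fun y : ℝ => y) :=
      (convexOn_id (convex_Ioi 0))
    have h2 : ConvexOn ℝ (Ioi (0:ℝ)) (fun y : ℝ => y⁻¹) := by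
      simpa using convexOn_zpow (𝕜 := ℝ) (-1)
    exact h1.add h2
  have hseg : x ∈ segment ℝ s t := by
    rw [segment_eq_Icc hst]; exact hx
  have hmax := hconv.le_on_segment (mem_Ioi.2 hs) (mem_Ioi.2 ht) hseg
  -- now convert
  have key : ∀ a b : ℝ, 0 < a → 0 < b → a + a⁻¹ ≤ b + b⁻¹ →
      (a + 1)^2 / (4 * a) ≤ (b + 1)^2 / (4 * b) := by
    intro a b ha hb hab
    rw [div_le_div_iff₀ (by positivity) (by positivity)]
    have e1 : a*b*(a+a⁻¹) = a*a*b + b := by field_simp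
    have e2 : a*b*(b+b⁻¹) = b*b*a + a := by field_simp
    have h3 : a*a*b + b ≤ b*b*a + a := by
      rw [← e1, ← e2]; exact mul_le_mul_of_nonneg_left hab (mul_pos ha hb).le
    nlinarith [h3]
  rcases max_cases (s + s⁻¹) (t + t⁻¹) with ⟨hm, _⟩ | ⟨hm, _⟩
  · rw [hm] at hmax
    exact le_max_of_le_left (key x s hx0 hs hmax)
  · rw [hm] at hmax
    exact le_max_of_le_right (key x t hx0 ht hmax)

/-- Scalar reverse Young inequality with Kantorovich constant. -/
lemma young_rev {x α : ℝ} (hx : 0 < x) (hα0 : 0 ≤ α) (hα1 : α ≤ 1) :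
    (1 - α) + α * x ≤ ((x + 1)^2 / (4 * x)) ^ max α (1 - α) * x ^ α := by
  set R := max α (1 - α) with hRdef
  have hRα : α ≤ R := le_max_left _ _
  have hRα' : 1 - α ≤ R := le_max_right _ _
  have hR0 : 0 ≤ R := le_trans hα0 hRα
  have hden : ∀ y : ℝ, 0 < y → 0 < 1 - α + α * y := by
    intro y hy
    rcases lt_or_ge y 1 with h | h
    · nlinarith
    · nlinarith
  set φ : ℝ → ℝ := fun y => 2*R*Real.log (y+1) - R*Real.log 4 - R*Real.log y
      + α*Real.log y - Real.log (1 - α + α*y) with hφ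
  set d : ℝ → ℝ := fun y => 2*R*(1/(y+1)) - R*(1/y) + α*(1/y) - α/(1-α+α*y) with hd
  have hderiv : ∀ y : ℝ, 0 < y → HasDerivAt φ (d y) y := by
    intro y hy
    have hy1 : (0:ℝ) < y + 1 := by linarith
    have hdy : 0 < 1 - α + α * y := hden y hy
    have l1 : HasDerivAt (fun z : ℝ => Real.log (z + 1)) (1/(y+1)) y := by
      simpa using (((hasDerivAt_id y).add_const 1).log hy1.ne')
    have l2 : HasDerivAt (fun z : ℝ => Real.log z) (1/y) y := by
      simpa [one_div] using (Real.hasDerivAt_log hy.ne')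
    have l3 : HasDerivAt (fun z : ℝ => Real.log (1 - α + α * z)) (α/(1-α+α*y)) y := by
      have : HasDerivAt (fun z : ℝ => 1 - α + α * z) α y := by
        simpa using (((hasDerivAt_id y).const_mul α).const_add (1-α))
      simpa using this.log hdy.ne'
    have := ((((l1.const_mul (2*R)).sub_const (R*Real.log 4)).sub
        (l2.const_mul R)).add (l2.const_mul α)).sub l3
    exact this
  -- sign of the derivative
  have hdsign : ∀ y : ℝ, 0 < y →
      d y = (y-1) * ((1-α)*(R-α) + α*y*(R-(1-α))) / (y*(y+1)*(1-α+α*y)) := by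
    intro y hy
    have hy1 : (0:ℝ) < y + 1 := by linarith
    have hdy : 0 < 1 - α + α * y := hden y hy
    simp only [hd]
    generalize hw : 1 - α + α * y = w at hdy ⊢
    have hw0 : w ≠ 0 := hdy.ne'
    field_simp
    rw [← hw]
    ring
  have hbr : ∀ y : ℝ, 0 ≤ y → 0 ≤ (1-α)*(R-α) + α*y*(R-(1-α)) := by
    intro y hy
    have h1 : 0 ≤ (1-α)*(R-α) := mul_nonneg (by linarith) (by linarith)
    have h2 : 0 ≤ α*y*(R-(1-α)) := mul_nonneg (mul_nonneg hα0 hy) (by linarith)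
    linarith
  have hφ1 : φ 1 = 0 := by
    have h4 : Real.log 4 = 2 * Real.log 2 := by
      rw [show (4:ℝ) = 2^2 by norm_num, Real.log_pow]; push_cast; ring
    simp [hφ, h4]
    ring
  have hφx : 0 ≤ φ x := by
    rcases le_total 1 x with h1x | h1x
    · -- monotone on [1, x]
      have hmono : MonotoneOn φ (Icc 1 x) := by
        apply monotoneOn_of_deriv_nonneg (convex_Icc 1 x)
        · intro y hy
          have hy0 : 0 < y := lt_of_lt_of_le one_pos hy.1
          exact (hderiv y hy0).continuousAt.continuousWithinAt
        · intro y hy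
          rw [interior_Icc] at hy
          have hy0 : 0 < y := lt_trans one_pos hy.1
          exact (hderiv y hy0).differentiableAt.differentiableWithinAt
        · intro y hy
          rw [interior_Icc] at hy
          have hy0 : 0 < y := lt_trans one_pos hy.1
          rw [(hderiv y hy0).deriv, hdsign y hy0]
          have hdy := hden y hy0
          apply div_nonneg
          · exact mul_nonneg (by linarith [hy.1]) (hbr y hy0.le)
          · positivity
      have := hmono (left_mem_Icc.2 h1x) (right_mem_Icc.2 h1x) h1x
      rw [hφ1] at this; exact this
    · -- antitone on [x, 1]
      have hanti : AntitoneOn φ (Icc x 1) := by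
        apply antitoneOn_of_deriv_nonpos (convex_Icc x 1)
        · intro y hy
          have hy0 : 0 < y := lt_of_lt_of_le hx hy.1
          exact (hderiv y hy0).continuousAt.continuousWithinAt
        · intro y hy
          rw [interior_Icc] at hy
          have hy0 : 0 < y := lt_trans hx hy.1
          exact (hderiv y hy0).differentiableAt.differentiableWithinAt
        · intro y hy
          rw [interior_Icc] at hy
          have hy0 : 0 < y := lt_trans hx hy.1
          rw [(hderiv y hy0).deriv, hdsign y hy0]
          have hdy := hden y hy0
          apply div_nonpos_of_nonpos_of_nonneg
          · exact mul_nonpos_of_nonpos_of_nonneg (by linarith [hy.2]) (hbr y hy0.le)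
          · positivity
      have := hanti (left_mem_Icc.2 h1x) (right_mem_Icc.2 h1x) h1x
      rw [hφ1] at this; exact this
  -- exponentiate
  have hKpos : 0 < (x+1)^2/(4*x) := by positivity
  have hdx : 0 < 1 - α + α * x := hden x hx
  have hlogK : Real.log ((x+1)^2/(4*x)) = 2*Real.log (x+1) - Real.log 4 - Real.log x := by
    rw [Real.log_div (by positivity) (by positivity), Real.log_mul (by norm_num) hx.ne',
      Real.log_pow]
    push_cast; ring
  have hle : Real.log (1 - α + α * x) ≤ R * Real.log ((x+1)^2/(4*x)) + α * Real.log x := by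
    rw [hlogK]
    have := hφx
    simp only [hφ] at this
    linarith
  calc (1 - α) + α * x = Real.exp (Real.log (1 - α + α * x)) := by
        rw [Real.exp_log hdx]
    _ ≤ Real.exp (R * Real.log ((x+1)^2/(4*x)) + α * Real.log x) := Real.exp_le_exp.2 hle
    _ = ((x + 1)^2 / (4 * x)) ^ R * x ^ α := by
        rw [Real.rpow_def_of_pos hKpos, Real.rpow_def_of_pos hx, ← Real.exp_add]
        congr 1
        ring


variable {n : Type*} [Fintype n] [DecidableEq n]

lemma psd_spectrum_nonneg {M : Matrix n n ℂ} (hM : M.PosSemidef) :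
    ∀ x ∈ spectrum ℝ M, 0 ≤ x := by
  intro x hx
  rw [Matrix.IsHermitian.spectrum_real_eq_range_eigenvalues hM.isHermitian] at hx
  obtain ⟨i, rfl⟩ := hx
  exact hM.eigenvalues_nonneg i

lemma spectrum_mem_Icc {M : Matrix n n ℂ} (hM : M.IsHermitian) {s t : ℝ}
    (h1 : (M - s • 1).PosSemidef) (h2 : (t • 1 - M).PosSemidef) :
    ∀ x ∈ spectrum ℝ M, x ∈ Set.Icc s t := by
  intro x hx
  have e1 : (s : ℝ) • (1 : Matrix n n ℂ) = algebraMap ℝ (Matrix n n ℂ) s := by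
    rw [Algebra.algebraMap_eq_smul_one]
  constructor
  · have hmem : x - s ∈ spectrum ℝ (M - s • 1) := by
      rw [e1, ← spectrum.sub_singleton_eq]
      exact Set.sub_mem_sub hx rfl
    have := psd_spectrum_nonneg h1 _ hmem
    linarith
  · have hmem : t - x ∈ spectrum ℝ (t • 1 - M) := by
      have e2 : (t : ℝ) • (1 : Matrix n n ℂ) = algebraMap ℝ (Matrix n n ℂ) t := by
        rw [Algebra.algebraMap_eq_smul_one]
      rw [e2, ← spectrum.singleton_sub_eq]
      exact Set.sub_mem_sub rfl hx
    have := psd_spectrum_nonneg h2 _ hmem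
    linarith

lemma cfc_posSemidef {M : Matrix n n ℂ} (hM : M.IsHermitian) {f : ℝ → ℝ}
    (hf : ∀ x ∈ spectrum ℝ M, 0 ≤ f x) : (cfc f M).PosSemidef := by
  rw [hM.cfc_eq]
  unfold Matrix.IsHermitian.cfc
  apply Matrix.PosSemidef.mul_mul_conjTranspose_same (B := (hM.eigenvectorUnitary : Matrix n n ℂ))
  · apply Matrix.PosSemidef.diagonal
    intro i
    have := hf _ (hM.eigenvalues_mem_spectrum_real i)
    simp only [Pi.zero_apply, Function.comp_apply]
    exact RCLike.ofReal_nonneg.2 this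


/-- Real power of a matrix via the continuous functional calculus. -/
noncomputable def mrpow (A : Matrix n n ℂ) (r : ℝ) : Matrix n n ℂ :=
  cfc (fun x : ℝ => x ^ r) A

lemma posdef_spectrum_pos {A : Matrix n n ℂ} (hA : A.PosDef) :
    ∀ x ∈ spectrum ℝ A, 0 < x := by
  intro x hx
  rw [Matrix.IsHermitian.spectrum_real_eq_range_eigenvalues hA.isHermitian] at hx
  obtain ⟨i, rfl⟩ := hx
  exact hA.eigenvalues_pos i

lemma rpow_contOn {A : Matrix n n ℂ} (hA : A.PosDef) (r : ℝ) :
    ContinuousOn (fun x : ℝ => x ^ r) (spectrum ℝ A) := fun x hx =>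
  (Real.continuousAt_rpow_const x r (Or.inl (posdef_spectrum_pos hA x hx).ne')).continuousWithinAt

lemma mrpow_isSelfAdjoint (A : Matrix n n ℂ) (r : ℝ) : IsSelfAdjoint (mrpow A r) :=
  cfc_predicate _ A

lemma mrpow_mul_mrpow {A : Matrix n n ℂ} (hA : A.PosDef) (r q : ℝ) :
    mrpow A r * mrpow A q = mrpow A (r + q) := by
  unfold mrpow
  rw [← cfc_mul _ _ A (rpow_contOn hA r) (rpow_contOn hA q)]
  exact cfc_congr fun x hx => (Real.rpow_add (posdef_spectrum_pos hA x hx) r q).symm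

lemma mrpow_one {A : Matrix n n ℂ} (hA : A.PosDef) : mrpow A 1 = A := by
  unfold mrpow
  have hsa : IsSelfAdjoint A := hA.isHermitian
  rw [cfc_congr (g := id) fun x _ => Real.rpow_one x, cfc_id ℝ A]

lemma mrpow_zero {A : Matrix n n ℂ} (hA : A.PosDef) : mrpow A 0 = 1 := by
  unfold mrpow
  have hsa : IsSelfAdjoint A := hA.isHermitian
  rw [cfc_congr (g := fun _ => (1:ℝ)) fun x _ => Real.rpow_zero x, cfc_const 1 A, _root_.map_one]

lemma half_mul_half {A : Matrix n n ℂ} (hA : A.PosDef) :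
    mrpow A (1/2) * mrpow A (1/2) = A := by
  rw [mrpow_mul_mrpow hA]; norm_num [mrpow_one hA]

lemma half_mul_neg_half {A : Matrix n n ℂ} (hA : A.PosDef) :
    mrpow A (1/2) * mrpow A (-(1/2)) = 1 := by
  rw [mrpow_mul_mrpow hA]; norm_num [mrpow_zero hA]

lemma neg_half_mul_half {A : Matrix n n ℂ} (hA : A.PosDef) :
    mrpow A (-(1/2)) * mrpow A (1/2) = 1 := by
  rw [mrpow_mul_mrpow hA]; norm_num [mrpow_zero hA]

lemma neg_half_conj_self {A : Matrix n n ℂ} (hA : A.PosDef) :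
    mrpow A (-(1/2)) * A * mrpow A (-(1/2)) = 1 := by
  have h1 := half_mul_half hA
  have h2 := neg_half_mul_half hA
  have h3 := half_mul_neg_half hA
  set X := mrpow A (-(1/2)) with hX
  set H := mrpow A (1/2) with hH
  calc X * A * X = (X * H) * (H * X) := by
        rw [← h1]; simp only [Matrix.mul_assoc]
    _ = 1 := by rw [h2, h3, Matrix.one_mul]

lemma conj_C {A : Matrix n n ℂ} (hA : A.PosDef) (B : Matrix n n ℂ) :
    mrpow A (1/2) * (mrpow A (-(1/2)) * B * mrpow A (-(1/2))) * mrpow A (1/2) = B := by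
  have h2 := neg_half_mul_half hA
  have h3 := half_mul_neg_half hA
  set X := mrpow A (-(1/2))
  set H := mrpow A (1/2)
  calc H * (X * B * X) * H = (H * X) * (B * (X * H)) := by simp only [Matrix.mul_assoc]
    _ = B := by rw [h3, h2, Matrix.one_mul, Matrix.mul_one]


/-- Weighted geometric mean `A ♯_α B = A^{1/2} (A^{-1/2} B A^{-1/2})^α A^{1/2}`. -/
noncomputable def geomMean (A B : Matrix n n ℂ) (α : ℝ) : Matrix n n ℂ :=
  mrpow A (1/2) * mrpow (mrpow A (-(1/2)) * B * mrpow A (-(1/2))) α * mrpow A (1/2)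

set_option maxHeartbeats 1000000 in
theorem stmt_4 (A B : Matrix n n ℂ) (hA : A.PosDef) (hB : B.PosDef)
    (s t α : ℝ) (hs : 0 < s) (hst : s ≤ t)
    (h1 : (B - s • A).PosSemidef) (h2 : (t • A - B).PosSemidef)
    (hα : α ∈ Set.Icc (0:ℝ) 1) :
    (max (((s + 1)^2 / (4 * s)) ^ max α (1 - α)) (((t + 1)^2 / (4 * t)) ^ max α (1 - α)) •
        geomMean A B α - ((1 - α) • A + α • B)).PosSemidef := by
  obtain ⟨hα0, hα1⟩ := hα
  have ht : 0 < t := lt_of_lt_of_le hs hst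
  set R := max α (1 - α) with hR
  have hR0 : 0 ≤ R := le_trans hα0 (le_max_left _ _)
  set Kc : ℝ := max (((s + 1)^2 / (4 * s)) ^ R) (((t + 1)^2 / (4 * t)) ^ R) with hKc
  set X := mrpow A (-(1/2)) with hXdef
  set H := mrpow A (1/2) with hHdef
  have hXh : Xᴴ = X := by
    rw [← Matrix.star_eq_conjTranspose]; exact mrpow_isSelfAdjoint A _
  have hHh : Hᴴ = H := by
    rw [← Matrix.star_eq_conjTranspose]; exact mrpow_isSelfAdjoint A _
  set C : Matrix n n ℂ := X * B * X with hCdef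
  have hCherm : C.IsHermitian := by
    show Cᴴ = C
    rw [hCdef, Matrix.conjTranspose_mul, Matrix.conjTranspose_mul, hXh, hB.isHermitian.eq]
    simp [Matrix.mul_assoc]
  -- Loewner bounds on C
  have hC1 : (C - s • (1 : Matrix n n ℂ)).PosSemidef := by
    have hps := h1.mul_mul_conjTranspose_same X
    rw [hXh] at hps
    have e : X * (B - s • A) * X = C - s • (1 : Matrix n n ℂ) := by
      rw [Matrix.mul_sub, Matrix.sub_mul, Matrix.mul_smul, Matrix.smul_mul,
        neg_half_conj_self hA]
    rwa [e] at hps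
  have hC2 : (t • (1 : Matrix n n ℂ) - C).PosSemidef := by
    have hps := h2.mul_mul_conjTranspose_same X
    rw [hXh] at hps
    have e : X * (t • A - B) * X = t • (1 : Matrix n n ℂ) - C := by
      rw [Matrix.mul_sub, Matrix.sub_mul, Matrix.mul_smul, Matrix.smul_mul,
        neg_half_conj_self hA]
    rwa [e] at hps
  have hCspec : ∀ x ∈ spectrum ℝ C, x ∈ Set.Icc s t := spectrum_mem_Icc hCherm hC1 hC2
  have hCpos : ∀ x ∈ spectrum ℝ C, 0 < x := fun x hx => lt_of_lt_of_le hs (hCspec x hx).1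
  -- the scalar function
  set g : ℝ → ℝ := fun y => Kc * y ^ α - ((1 - α) + α * y) with hg
  have hgnn : ∀ y ∈ spectrum ℝ C, 0 ≤ g y := by
    intro y hy
    have hy0 : 0 < y := hCpos y hy
    have hyoung := young_rev hy0 hα0 hα1
    have hKy : ((y + 1)^2 / (4 * y)) ^ R ≤ Kc := by
      have hKle := K_le_max hs (hCspec y hy)
      rcases le_total ((s + 1)^2 / (4 * s)) ((t + 1)^2 / (4 * t)) with hmax | hmax
      · refine le_max_of_le_right (Real.rpow_le_rpow (by positivity) ?_ hR0)
        rwa [max_eq_right hmax] at hKle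
      · refine le_max_of_le_left (Real.rpow_le_rpow (by positivity) ?_ hR0)
        rwa [max_eq_left hmax] at hKle
    have : (1 - α) + α * y ≤ Kc * y ^ α := by
      refine le_trans hyoung ?_
      exact mul_le_mul_of_nonneg_right hKy (Real.rpow_nonneg hy0.le α)
    simpa [hg] using sub_nonneg.2 this
  have hD : (cfc g C).PosSemidef := cfc_posSemidef hCherm hgnn
  -- identify cfc g C
  have hCsa : IsSelfAdjoint C := hCherm
  have hcont : ContinuousOn (fun y : ℝ => y ^ α) (spectrum ℝ C) := fun x hx =>
    (Real.continuousAt_rpow_const x α (Or.inl (hCpos x hx).ne')).continuousWithinAt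
  have hDeq : cfc g C
      = Kc • mrpow C α - ((1 - α) • (1 : Matrix n n ℂ) + α • C) := by
    have e1 : cfc g C = cfc (fun y : ℝ => Kc * y ^ α) C - cfc (fun y : ℝ => (1 - α) + α * y) C := by
      rw [← cfc_sub _ _ C (by exact hcont.const_smul Kc) (by fun_prop)]
    have e2 : cfc (fun y : ℝ => Kc * y ^ α) C = Kc • mrpow C α := by
      rw [show (fun y : ℝ => Kc * y ^ α) = (fun y : ℝ => Kc • y ^ α) from rfl]
      exact cfc_smul Kc (fun y : ℝ => y ^ α) C hcont
    have e3 : cfc (fun y : ℝ => (1 - α) + α * y) C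
        = (1 - α) • (1 : Matrix n n ℂ) + α • C := by
      rw [cfc_add C (fun _ : ℝ => 1 - α) (fun y : ℝ => α * y) (by fun_prop) (by fun_prop),
        cfc_const (1 - α) C, Algebra.algebraMap_eq_smul_one]
      congr 1
      rw [show (fun y : ℝ => α * y) = (fun y : ℝ => α • y) from rfl]
      exact cfc_smul_id α C
    rw [e1, e2, e3]
  -- conjugate back
  have key : Kc • geomMean A B α - ((1 - α) • A + α • B) = H * (cfc g C) * H := by
    rw [hDeq, Matrix.mul_sub, Matrix.sub_mul, Matrix.mul_add, Matrix.add_mul,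
      Matrix.mul_smul, Matrix.mul_smul, Matrix.mul_smul, Matrix.smul_mul, Matrix.smul_mul,
      Matrix.smul_mul, Matrix.mul_one]
    rw [show H * H = A from half_mul_half hA, show H * C * H = B from conj_C hA B]
    rfl
  rw [key]
  nth_rewrite 2 [← hHh]
  exact hD.mul_mul_conjTranspose_same H
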